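/- Quasisymmetry: the d-dimensional Grothendieck polynomial g_ρ(x^{(1)}; ...; x^{(d)}) is quasisymmetric in the variables x^{(1)} = (x₁,...,x_{n₁}); that is, for all exponents a₁,...,a_k > 0 and all strictly increasing index sequences ℓ₁<···<ℓ_k and j₁<···<j_k in [n₁], the coefficient of x_{ℓ₁}^{a₁}···x_{ℓ_k}^{a_k} in g_ρ equals the coefficient of x_{j₁}^{a₁}···x_{j_k}^{a_k} (treating other x^{(1)} variables as absent and fixing the x^{(2)},...,x^{(d)} monomials). -/

import Mathlib

open scoped BigOperators

noncomputable section

namespace HDG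

/- Throughout, the paper's dimension is `d = e + 1`: a `d`-dimensional partition is a
finitely supported, componentwise weakly decreasing function `ℕ × (Fin e → ℕ) → ℕ`
(the first of the `d` coordinates is split off; all coordinates are 0-based). -/

variable {e : ℕ}

/-- The step `i' → i' + e_ℓ`. -/
def step (i : Fin e → ℕ) (ℓ : Fin e) : Fin e → ℕ := Function.update i ℓ (i ℓ + 1)

/-- A `d = e+1`-dimensional partition. -/
def IsPart (π : ℕ × (Fin e → ℕ) → ℕ) : Prop :=
  (Function.support π).Finite ∧
    ∀ i j : ℕ × (Fin e → ℕ), i.1 ≤ j.1 → (∀ ℓ, i.2 ℓ ≤ j.2 ℓ) → π j ≤ π i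

/-- A `(d-1) = e`-dimensional partition. -/
def IsPart' (ρ : (Fin e → ℕ) → ℕ) : Prop :=
  (Function.support ρ).Finite ∧ ∀ i j : Fin e → ℕ, (∀ ℓ, i ℓ ≤ j ℓ) → ρ j ≤ ρ i

/-- The diagram of a `(d-1)`-dimensional partition `ρ`: the points `(i', k)`
with `1 ≤ k ≤ ρ i'`. -/
def Diag (ρ : (Fin e → ℕ) → ℕ) : Set ((Fin e → ℕ) × ℕ) := {p | 1 ≤ p.2 ∧ p.2 ≤ ρ p.1}

/-- `sh₁(π)`: the projection of the diagram of `π` forgetting the first coordinate. -/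
def sh1 (π : ℕ × (Fin e → ℕ) → ℕ) : Set ((Fin e → ℕ) × ℕ) :=
  {p | ∃ i₁ : ℕ, 1 ≤ p.2 ∧ p.2 ≤ π (i₁, p.1)}

/-- `(i₁, i', k)` is a corner of `π`: a point of the diagram such that adding any of
the first `d` standard basis vectors leaves the diagram. -/
def Corner (π : ℕ × (Fin e → ℕ) → ℕ) (i₁ : ℕ) (i' : Fin e → ℕ) (k : ℕ) : Prop :=
  1 ≤ k ∧ k ≤ π (i₁, i') ∧ π (i₁ + 1, i') < k ∧ ∀ ℓ, π (i₁, step i' ℓ) < k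

/-- `c_i(π)`: the number of corners of `π` with first coordinate `i₁`. -/
def cI (π : ℕ × (Fin e → ℕ) → ℕ) (i₁ : ℕ) : ℕ :=
  Nat.card {q : (Fin e → ℕ) × ℕ | Corner π i₁ q.1 q.2}

/-- The diagram of `π` is contained in the box `[m] × [N 0] × ⋯ × [N (e-1)] × [nLast]`. -/
def InBox (m : ℕ) (N : Fin e → ℕ) (nLast : ℕ) (π : ℕ × (Fin e → ℕ) → ℕ) : Prop :=
  (∀ p, π p ≠ 0 → p.1 < m ∧ ∀ ℓ, p.2 ℓ < N ℓ) ∧ ∀ p, π p ≤ nLast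

/-- The diagram of `π` is contained in `[m] × [N 0] × ⋯ × [N (e-1)] × ℤ₊`
(no bound on the values). -/
def InBox' (m : ℕ) (N : Fin e → ℕ) (π : ℕ × (Fin e → ℕ) → ℕ) : Prop :=
  ∀ p, π p ≠ 0 → p.1 < m ∧ ∀ ℓ, p.2 ℓ < N ℓ

end HDG

open HDG
/-- The full multivariable `d`-dimensional Grothendieck polynomial
`g_ρ(x^{(1)}; …; x^{(d)})`: the variable `x^{(1)}_{i₁}` is `X (Sum.inl i₁)` and, for
`2 ≤ j ≤ d`, the variable `x^{(j)}_{i_j}` is `X (Sum.inr (j, i_j))`. -/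
noncomputable def gFull (e : ℕ) (m : ℕ) (N : Fin e → ℕ) (nLast : ℕ)
    (ρ : (Fin e → ℕ) → ℕ) : MvPolynomial (ℕ ⊕ (Fin e × ℕ)) ℚ :=
  ∑ᶠ π ∈ {π : ℕ × (Fin e → ℕ) → ℕ | IsPart π ∧ InBox m N nLast π ∧ sh1 π = Diag ρ},
    ∏ᶠ c ∈ {c : ℕ × (Fin e → ℕ) × ℕ | Corner π c.1 c.2.1 c.2.2},
      MvPolynomial.X (Sum.inl c.1) * ∏ ℓ : Fin e, MvPolynomial.X (Sum.inr (ℓ, c.2.1 ℓ))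

/-- The exponent vector of the monomial `x_{l 0}^{a 0} ⋯ x_{l (k-1)}^{a (k-1)}` in the
first alphabet, times a fixed monomial `w` in the remaining alphabets. -/
noncomputable def expVec {e : ℕ} {k : ℕ} (l : Fin k → ℕ) (a : Fin k → ℕ)
    (w : (Fin e × ℕ) →₀ ℕ) : (ℕ ⊕ (Fin e × ℕ)) →₀ ℕ :=
  (∑ t : Fin k, Finsupp.single (Sum.inl (l t)) (a t)) + w.mapDomain Sum.inr


section Aux

open Classical MvPolynomial Finsupp Sum

namespace HDG

variable {e : ℕ}

/-! ### Basic partition lemmas -/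

lemma IsPart.mono1 {π : ℕ × (Fin e → ℕ) → ℕ} (hπ : IsPart π) {i i' : ℕ}
    (x : Fin e → ℕ) (h : i ≤ i') : π (i', x) ≤ π (i, x) :=
  hπ.2 (i, x) (i', x) h (fun _ => le_rfl)

lemma IsPart.mono2 {π : ℕ × (Fin e → ℕ) → ℕ} (hπ : IsPart π) (i : ℕ)
    {x y : Fin e → ℕ} (h : ∀ ℓ, x ℓ ≤ y ℓ) : π (i, y) ≤ π (i, x) :=
  hπ.2 (i, x) (i, y) le_rfl h

lemma step_ge (x : Fin e → ℕ) (ℓ ℓ' : Fin e) : x ℓ' ≤ step x ℓ ℓ' := by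
  unfold step
  rcases eq_or_ne ℓ' ℓ with rfl | h
  · simp
  · rw [Function.update_of_ne h]

/-! ### Corner sets and exponent vectors -/

def CornerSet (π : ℕ × (Fin e → ℕ) → ℕ) : Set (ℕ × (Fin e → ℕ) × ℕ) :=
  {c | Corner π c.1 c.2.1 c.2.2}

noncomputable def vOf (c : ℕ × (Fin e → ℕ) × ℕ) : (ℕ ⊕ (Fin e × ℕ)) →₀ ℕ :=
  Finsupp.single (Sum.inl c.1) 1 + ∑ ℓ : Fin e, Finsupp.single (Sum.inr (ℓ, c.2.1 ℓ)) 1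

noncomputable def EV (π : ℕ × (Fin e → ℕ) → ℕ) : (ℕ ⊕ (Fin e × ℕ)) →₀ ℕ :=
  ∑ᶠ c ∈ CornerSet π, vOf c

lemma cornerSet_finite {π : ℕ × (Fin e → ℕ) → ℕ} {m : ℕ} {N : Fin e → ℕ} {nLast : ℕ}
    (hπ : IsPart π) (hbox : InBox m N nLast π) : (CornerSet π).Finite := by
  have hsub : CornerSet π ⊆
      (fun c : ℕ × (Fin e → ℕ) × ℕ => ((c.1, c.2.1), c.2.2)) ⁻¹'
        ((Function.support π) ×ˢ (Set.Icc 1 nLast)) := by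
    rintro ⟨i, x, κ⟩ hc
    obtain ⟨h1, h2, _, _⟩ := hc
    refine Set.mem_preimage.mpr ⟨?_, Set.mem_Icc.mpr ⟨h1, h2.trans (hbox.2 _)⟩⟩
    show π (i, x) ≠ 0
    simp only [Corner] at h1 h2
    omega
  refine Set.Finite.subset (Set.Finite.preimage ?_ (hπ.1.prod (Set.finite_Icc 1 nLast))) hsub
  intro a _ b _ hab
  simp only [Prod.mk.injEq] at hab
  exact Prod.ext hab.1.1 (Prod.ext hab.1.2 hab.2)

lemma vOf_apply_inl (c : ℕ × (Fin e → ℕ) × ℕ) (i : ℕ) :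
    vOf c (Sum.inl i) = if c.1 = i then 1 else 0 := by
  unfold vOf
  rw [Finsupp.add_apply, Finsupp.finset_sum_apply]
  have : ∀ ℓ : Fin e, (Finsupp.single (Sum.inr (ℓ, c.2.1 ℓ)) 1 : (ℕ ⊕ (Fin e × ℕ)) →₀ ℕ)
      (Sum.inl i) = 0 := fun ℓ => Finsupp.single_eq_of_ne (by simp)
  rw [Finset.sum_congr rfl (fun ℓ _ => this ℓ), Finset.sum_const_zero, add_zero,
    Finsupp.single_apply]
  simp

lemma vOf_apply_inr (c : ℕ × (Fin e → ℕ) × ℕ) (p : Fin e × ℕ) :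
    vOf c (Sum.inr p) = ∑ ℓ : Fin e, (if (ℓ, c.2.1 ℓ) = p then 1 else 0) := by
  unfold vOf
  rw [Finsupp.add_apply, Finsupp.finset_sum_apply,
    Finsupp.single_eq_of_ne (by simp), zero_add]
  refine Finset.sum_congr rfl fun ℓ _ => ?_
  rw [Finsupp.single_apply]
  simp

lemma prod_monomial {α : Type*} (s : Finset α) (f : α → ((ℕ ⊕ (Fin e × ℕ)) →₀ ℕ)) :
    ∏ c ∈ s, (MvPolynomial.monomial (f c) (1 : ℚ)) = MvPolynomial.monomial (∑ c ∈ s, f c) 1 := by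
  induction s using Finset.cons_induction with
  | empty => simp
  | cons a s ha ih =>
      rw [Finset.prod_cons, Finset.sum_cons, ih, MvPolynomial.monomial_mul, one_mul]

lemma term_eq_monomial {π : ℕ × (Fin e → ℕ) → ℕ} (h : (CornerSet π).Finite) :
    (∏ᶠ c ∈ {c : ℕ × (Fin e → ℕ) × ℕ | Corner π c.1 c.2.1 c.2.2},
      (MvPolynomial.X (Sum.inl c.1) *
        ∏ ℓ : Fin e, MvPolynomial.X (Sum.inr (ℓ, c.2.1 ℓ)) : MvPolynomial (ℕ ⊕ (Fin e × ℕ)) ℚ))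
      = MvPolynomial.monomial (EV π) 1 := by
  have hset : {c : ℕ × (Fin e → ℕ) × ℕ | Corner π c.1 c.2.1 c.2.2} = ↑h.toFinset := by
    rw [Set.Finite.coe_toFinset]; rfl
  have hEV : EV π = ∑ c ∈ h.toFinset, vOf c := by
    rw [← finsum_mem_coe_finset]
    exact finsum_mem_congr hset (fun _ _ => rfl)
  rw [show (∏ᶠ c ∈ {c : ℕ × (Fin e → ℕ) × ℕ | Corner π c.1 c.2.1 c.2.2},
      (MvPolynomial.X (Sum.inl c.1) *
        ∏ ℓ : Fin e, MvPolynomial.X (Sum.inr (ℓ, c.2.1 ℓ)) : MvPolynomial (ℕ ⊕ (Fin e × ℕ)) ℚ))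
      = ∏ c ∈ h.toFinset, (MvPolynomial.X (Sum.inl c.1) *
        ∏ ℓ : Fin e, MvPolynomial.X (Sum.inr (ℓ, c.2.1 ℓ))) from by
    rw [← finprod_mem_coe_finset]
    exact finprod_mem_congr hset (fun _ _ => rfl), hEV, ← prod_monomial]
  refine Finset.prod_congr rfl fun c _ => ?_
  have hX : ∀ s : ℕ ⊕ (Fin e × ℕ), (MvPolynomial.X s : MvPolynomial (ℕ ⊕ (Fin e × ℕ)) ℚ)
      = MvPolynomial.monomial (Finsupp.single s 1) 1 := fun s => rfl
  rw [hX, show (∏ ℓ : Fin e, MvPolynomial.X (Sum.inr (ℓ, c.2.1 ℓ)) : MvPolynomial (ℕ ⊕ (Fin e × ℕ)) ℚ)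
      = MvPolynomial.monomial (∑ ℓ : Fin e, Finsupp.single (Sum.inr (ℓ, c.2.1 ℓ)) 1) 1 from by
    rw [← prod_monomial]; exact Finset.prod_congr rfl fun ℓ _ => rfl,
    MvPolynomial.monomial_mul, one_mul]
  rfl


/-! ### Finiteness of the set of partitions in a box -/

lemma box_finite (m : ℕ) (N : Fin e → ℕ) :
    ({p : ℕ × (Fin e → ℕ) | p.1 < m ∧ ∀ ℓ, p.2 ℓ < N ℓ}).Finite := by
  have h1 : ({p : ℕ × (Fin e → ℕ) | p.1 < m ∧ ∀ ℓ, p.2 ℓ < N ℓ}) ⊆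
      (Set.Iio m) ×ˢ (Set.univ.pi fun ℓ => Set.Iio (N ℓ)) := by
    rintro ⟨i, x⟩ ⟨h1, h2⟩
    exact ⟨h1, fun ℓ _ => h2 ℓ⟩
  exact Set.Finite.subset ((Set.finite_Iio m).prod (Set.Finite.pi fun ℓ => Set.finite_Iio _))
    h1

lemma S_finite (m : ℕ) (N : Fin e → ℕ) (nLast : ℕ) (ρ : (Fin e → ℕ) → ℕ) :
    ({π : ℕ × (Fin e → ℕ) → ℕ | IsPart π ∧ InBox m N nLast π ∧ sh1 π = Diag ρ}).Finite := by
  set B : Set (ℕ × (Fin e → ℕ)) := {p | p.1 < m ∧ ∀ ℓ, p.2 ℓ < N ℓ} with hB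
  have hBfin : B.Finite := box_finite m N
  haveI : Finite B := hBfin.to_subtype
  set F : (B → Fin (nLast + 1)) → (ℕ × (Fin e → ℕ) → ℕ) :=
    fun g p => if h : p ∈ B then (g ⟨p, h⟩ : ℕ) else 0 with hF
  refine Set.Finite.subset (Set.finite_range F) ?_
  rintro π ⟨hπ, hbox, -⟩
  refine ⟨fun q => ⟨π q.1, Nat.lt_succ_of_le (hbox.2 _)⟩, ?_⟩
  funext p
  rw [hF]
  by_cases hp : p ∈ B
  · simp [hp]
  · simp only [hp, dif_neg, not_false_iff]
    by_contra h0
    exact hp (hbox.1 p (fun h => h0 h.symm))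

/-! ### The coefficient of `gFull` as a count -/

lemma coeff_gFull (m : ℕ) (N : Fin e → ℕ) (nLast : ℕ) (ρ : (Fin e → ℕ) → ℕ)
    (v : (ℕ ⊕ (Fin e × ℕ)) →₀ ℕ) :
    MvPolynomial.coeff v (gFull e m N nLast ρ) =
      (((S_finite m N nLast ρ).toFinset.filter fun π => EV π = v).card : ℚ) := by
  unfold gFull
  rw [show ∑ᶠ π ∈ {π : ℕ × (Fin e → ℕ) → ℕ | IsPart π ∧ InBox m N nLast π ∧ sh1 π = Diag ρ},
      (∏ᶠ c ∈ {c : ℕ × (Fin e → ℕ) × ℕ | Corner π c.1 c.2.1 c.2.2},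
        (MvPolynomial.X (Sum.inl c.1) *
          ∏ ℓ : Fin e, MvPolynomial.X (Sum.inr (ℓ, c.2.1 ℓ)) : MvPolynomial (ℕ ⊕ (Fin e × ℕ)) ℚ))
      = ∑ π ∈ (S_finite m N nLast ρ).toFinset,
      (∏ᶠ c ∈ {c : ℕ × (Fin e → ℕ) × ℕ | Corner π c.1 c.2.1 c.2.2},
        (MvPolynomial.X (Sum.inl c.1) *
          ∏ ℓ : Fin e, MvPolynomial.X (Sum.inr (ℓ, c.2.1 ℓ)))) from by
    rw [← finsum_mem_coe_finset]
    exact finsum_mem_congr (Set.Finite.coe_toFinset _).symm (fun _ _ => rfl)]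
  rw [MvPolynomial.coeff_sum]
  have hterms : ∀ π ∈ (S_finite m N nLast ρ).toFinset,
      MvPolynomial.coeff v (∏ᶠ c ∈ {c : ℕ × (Fin e → ℕ) × ℕ | Corner π c.1 c.2.1 c.2.2},
        (MvPolynomial.X (Sum.inl c.1) *
          ∏ ℓ : Fin e, MvPolynomial.X (Sum.inr (ℓ, c.2.1 ℓ)) : MvPolynomial (ℕ ⊕ (Fin e × ℕ)) ℚ))
      = if EV π = v then (1 : ℚ) else 0 := by
    intro π hπ
    have hmem := (Set.Finite.mem_toFinset _).mp hπ
    rw [term_eq_monomial (cornerSet_finite hmem.1 hmem.2.1), MvPolynomial.coeff_monomial]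
  rw [Finset.sum_congr rfl hterms, Finset.sum_boole]

/-! ### Layers with no corner -/

lemma layers_eq_of_no_corner {π : ℕ × (Fin e → ℕ) → ℕ} (hπ : IsPart π) {i : ℕ}
    (h : ∀ x κ, ¬ Corner π i x κ) : ∀ x, π (i + 1, x) = π (i, x) := by
  by_contra hne
  push_neg at hne
  obtain ⟨x₀, hx₀⟩ := hne
  set A : Set (Fin e → ℕ) := {x | π (i + 1, x) < π (i, x)} with hA
  have hAfin : A.Finite := by
    have hsub : A ⊆ (fun x : Fin e → ℕ => ((i, x) : ℕ × (Fin e → ℕ))) ⁻¹' Function.support π := by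
      intro x hx
      simp only [Set.mem_preimage, Function.mem_support]
      have : π (i + 1, x) < π (i, x) := hx
      omega
    refine Set.Finite.subset (Set.Finite.preimage ?_ hπ.1) hsub
    intro a _ b _ hab
    exact congrArg Prod.snd hab
  have hx₀A : x₀ ∈ A := lt_of_le_of_ne (hπ.mono1 x₀ (Nat.le_succ i)) hx₀
  obtain ⟨x, hx, hmax⟩ := Finset.exists_max_image hAfin.toFinset (fun x => ∑ ℓ, x ℓ)
    ⟨x₀, hAfin.mem_toFinset.mpr hx₀A⟩
  have hxA : π (i + 1, x) < π (i, x) := hAfin.mem_toFinset.mp hx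
  refine h x (π (i, x)) ⟨by omega, le_rfl, hxA, fun ℓ => ?_⟩
  by_contra hℓ
  push_neg at hℓ
  have heq : π (i, step x ℓ) = π (i, x) :=
    le_antisymm (hπ.mono2 i (step_ge x ℓ)) hℓ
  have hstepA : step x ℓ ∈ A := by
    have : π (i + 1, step x ℓ) ≤ π (i + 1, x) := hπ.mono2 (i+1) (step_ge x ℓ)
    show π (i + 1, step x ℓ) < π (i, step x ℓ)
    omega
  have hsum : ∑ ℓ', step x ℓ ℓ' = (∑ ℓ', x ℓ') + 1 := by
    unfold step
    rw [Finset.sum_update_of_mem (Finset.mem_univ ℓ)]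
    rw [← Finset.add_sum_erase _ _ (Finset.mem_univ ℓ), Finset.sdiff_singleton_eq_erase]
    omega
  have := hmax (step x ℓ) (hAfin.mem_toFinset.mpr hstepA)
  omega

lemma layers_eq_of_no_corner_between {π : ℕ × (Fin e → ℕ) → ℕ} (hπ : IsPart π) {i₁ i₂ : ℕ}
    (hle : i₁ ≤ i₂) (h : ∀ i, i₁ ≤ i → i < i₂ → ∀ x κ, ¬ Corner π i x κ) :
    ∀ x, π (i₂, x) = π (i₁, x) := by
  induction i₂, hle using Nat.le_induction with
  | base => exact fun _ => rfl
  | succ n hn ih =>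
      intro x
      rw [layers_eq_of_no_corner hπ (h n hn (Nat.lt_succ_self n)) x]
      exact ih (fun i h1 h2 => h i h1 (h2.trans (Nat.lt_succ_self n))) x


/-! ### Breakpoint counting functions -/

variable {k : ℕ}

def bb (l : Fin k → ℕ) (i : ℕ) : ℕ := (Finset.univ.filter fun s => l s < i).card

def rr (l : Fin k → ℕ) : ℕ → ℕ
  | 0 => 0
  | (t + 1) => if h : t < k then l ⟨t, h⟩ + 1 else 0

lemma bb_le (l : Fin k → ℕ) (i : ℕ) : bb l i ≤ k := by
  unfold bb
  exact (Finset.card_filter_le _ _).trans (by simp)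

lemma bb_lt_iff {l : Fin k → ℕ} (hl : StrictMono l) {s : Fin k} {i : ℕ} :
    (s : ℕ) < bb l i ↔ l s < i := by
  constructor
  · intro h
    by_contra hc
    push_neg at hc
    have hsub : (Finset.univ.filter fun s' => l s' < i) ⊆ Finset.Iio s := by
      intro s' hs'
      rw [Finset.mem_filter] at hs'
      rw [Finset.mem_Iio]
      exact hl.lt_iff_lt.mp (lt_of_lt_of_le hs'.2 hc)
    have := (Finset.card_le_card hsub).trans_eq (Fin.card_Iio s)
    unfold bb at h
    omega
  · intro h
    have hsub : Finset.Iic s ⊆ (Finset.univ.filter fun s' => l s' < i) := by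
      intro s' hs'
      rw [Finset.mem_Iic] at hs'
      exact Finset.mem_filter.mpr ⟨Finset.mem_univ _, lt_of_le_of_lt (hl.monotone hs') h⟩
    have := (Fin.card_Iic s).symm.trans_le (Finset.card_le_card hsub)
    unfold bb
    omega

lemma nat_ext_of_fin_lt_iff {u v : ℕ} (hu : u ≤ k) (hv : v ≤ k)
    (h : ∀ s : Fin k, (s : ℕ) < u ↔ (s : ℕ) < v) : u = v := by
  by_contra hne
  rcases Nat.lt_or_ge u v with hlt | hge
  · have := h ⟨u, lt_of_lt_of_le hlt hv⟩
    simp at this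
    omega
  · have huv : v < u := by omega
    have := h ⟨v, lt_of_lt_of_le huv hu⟩
    simp at this
    omega

lemma bb_breakpoint {l : Fin k → ℕ} (hl : StrictMono l) (t : Fin k) : bb l (l t) = t := by
  refine nat_ext_of_fin_lt_iff (bb_le l _) t.2.le fun s => ?_
  rw [bb_lt_iff hl, hl.lt_iff_lt, Fin.lt_iff_val_lt_val]

lemma bb_breakpoint_succ {l : Fin k → ℕ} (hl : StrictMono l) (t : Fin k) :
    bb l (l t + 1) = t + 1 := by
  refine nat_ext_of_fin_lt_iff (bb_le l _) t.2 fun s => ?_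
  rw [bb_lt_iff hl, Nat.lt_succ_iff, Nat.lt_succ_iff]
  exact ⟨fun h' => Fin.le_iff_val_le_val.mp (hl.le_iff_le.mp h'),
    fun h' => hl.monotone (Fin.le_iff_val_le_val.mpr h')⟩

lemma bb_of_notin {l : Fin k → ℕ} (hl : StrictMono l) {i : ℕ} (hi : ∀ t, l t ≠ i) :
    bb l (i + 1) = bb l i := by
  refine nat_ext_of_fin_lt_iff (bb_le l _) (bb_le l _) fun s => ?_
  rw [bb_lt_iff hl, bb_lt_iff hl, Nat.lt_succ_iff]
  have := hi s
  omega

lemma bb_mono (l : Fin k → ℕ) : Monotone (bb l) := by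
  intro i i' h
  unfold bb
  refine Finset.card_le_card fun s hs => ?_
  rw [Finset.mem_filter] at hs ⊢
  exact ⟨hs.1, lt_of_lt_of_le hs.2 h⟩

lemma bb_zero (l : Fin k → ℕ) : bb l 0 = 0 := by
  unfold bb
  simp

lemma bb_eq_k {l : Fin k → ℕ} {i : ℕ} (h : ∀ t, l t < i) : bb l i = k := by
  unfold bb
  rw [Finset.filter_true_of_mem fun s _ => h s]
  simp

lemma rr_succ (l : Fin k → ℕ) {t : ℕ} (h : t < k) : rr l (t + 1) = l ⟨t, h⟩ + 1 := dif_pos h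

lemma rr_mono_on {l : Fin k → ℕ} (hl : StrictMono l) {t t' : ℕ} (h : t ≤ t') (h' : t' ≤ k) :
    rr l t ≤ rr l t' := by
  match t, t' with
  | 0, _ => exact Nat.zero_le _
  | (u + 1), (u' + 1) =>
      have hu' : u' < k := h'
      have hu : u < k := lt_of_le_of_lt (by omega) hu'
      rw [rr_succ l hu, rr_succ l hu']
      have : l ⟨u, hu⟩ ≤ l ⟨u', hu'⟩ := hl.monotone (by exact Fin.mk_le_mk.mpr (by omega))
      omega

lemma rr_bb_le {l : Fin k → ℕ} (hl : StrictMono l) (i : ℕ) : rr l (bb l i) ≤ i := by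
  rcases h : bb l i with _ | u
  · exact Nat.zero_le i
  · have hu : u < k := by have := bb_le l i; omega
    have : (⟨u, hu⟩ : Fin k) < bb l i := by rw [h]; exact Nat.lt_succ_self u
    have hlt : l ⟨u, hu⟩ < i := (bb_lt_iff hl).mp this
    rw [rr_succ l hu]
    omega

lemma bb_rr {l : Fin k → ℕ} (hl : StrictMono l) {t : ℕ} (ht : t ≤ k) : bb l (rr l t) = t := by
  match t with
  | 0 => rw [show rr l 0 = 0 from rfl, bb_zero]
  | (u + 1) =>
      have hu : u < k := ht
      rw [rr_succ l hu, bb_breakpoint_succ hl ⟨u, hu⟩]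

lemma no_break_in_bb_interval {l : Fin k → ℕ} (hl : StrictMono l) {i : ℕ} (s : Fin k)
    (h1 : rr l (bb l i) ≤ l s) (h2 : l s < i) : False := by
  have hs : (s : ℕ) < bb l i := (bb_lt_iff hl).mpr h2
  rcases h : bb l i with _ | u
  · omega
  · have hu : u < k := by have := bb_le l i; omega
    rw [h, rr_succ l hu] at h1
    have hsu : (s : ℕ) ≤ u := by omega
    have : l s ≤ l ⟨u, hu⟩ := hl.monotone (Fin.le_def.mpr hsu)
    omega

lemma no_break_in_rr_interval {l : Fin k → ℕ} (hl : StrictMono l) (t : Fin k) (s : Fin k)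
    (h1 : rr l (t : ℕ) ≤ l s) (h2 : l s < l t) : False := by
  have hst : (s : ℕ) < (t : ℕ) := hl.lt_iff_lt.mp h2
  rcases ht : (t : ℕ) with _ | u
  · omega
  · have hu : u < k := by have := t.2; omega
    rw [ht, rr_succ l hu] at h1
    have hsu : (s : ℕ) ≤ u := by omega
    have : l s ≤ l ⟨u, hu⟩ := hl.monotone (Fin.le_def.mpr hsu)
    omega

lemma rr_le_self {l : Fin k → ℕ} (hl : StrictMono l) (t : Fin k) : rr l (t : ℕ) ≤ l t := by
  rcases ht : (t : ℕ) with _ | u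
  · exact Nat.zero_le _
  · have hu : u < k := by have := t.2; omega
    rw [rr_succ l hu]
    have hut : u < (t : ℕ) := by omega
    have : l ⟨u, hu⟩ < l t := hl (Fin.lt_def.mpr hut)
    omega


/-! ### Applying exponent vectors -/

lemma expVec_apply_inl (l : Fin k → ℕ) (a : Fin k → ℕ) (w : (Fin e × ℕ) →₀ ℕ) (i : ℕ) :
    _root_.expVec l a w (Sum.inl i) = ∑ t : Fin k, if l t = i then a t else 0 := by
  unfold _root_.expVec
  rw [Finsupp.add_apply, Finsupp.finset_sum_apply,
    Finsupp.mapDomain_notin_range _ _ (by simp), add_zero]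
  refine Finset.sum_congr rfl fun t _ => ?_
  rw [Finsupp.single_apply]
  simp

lemma expVec_apply_inr (l : Fin k → ℕ) (a : Fin k → ℕ) (w : (Fin e × ℕ) →₀ ℕ) (p : Fin e × ℕ) :
    _root_.expVec l a w (Sum.inr p) = w p := by
  unfold _root_.expVec
  rw [Finsupp.add_apply, Finsupp.finset_sum_apply,
    Finsupp.mapDomain_apply Sum.inr_injective]
  rw [Finset.sum_congr rfl fun t _ => Finsupp.single_eq_of_ne (by simp),
    Finset.sum_const_zero, zero_add]

lemma EV_eq_sum {π : ℕ × (Fin e → ℕ) → ℕ} (hfin : (CornerSet π).Finite) :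
    EV π = ∑ c ∈ hfin.toFinset, vOf c := by
  rw [← finsum_mem_coe_finset]
  exact finsum_mem_congr (Set.Finite.coe_toFinset _).symm (fun _ _ => rfl)

lemma EV_apply_inl {π : ℕ × (Fin e → ℕ) → ℕ} (hfin : (CornerSet π).Finite) (i : ℕ) :
    EV π (Sum.inl i) = ((hfin.toFinset.filter fun c => c.1 = i).card : ℕ) := by
  rw [EV_eq_sum hfin, Finsupp.finset_sum_apply, Finset.card_filter]
  exact Finset.sum_congr rfl fun c _ => vOf_apply_inl c i

/-! ### Consequences of the coefficient hypothesis -/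

section Ctx

variable {k m nLast : ℕ} {N : Fin e → ℕ}
  {π : ℕ × (Fin e → ℕ) → ℕ} {l : Fin k → ℕ} {a : Fin k → ℕ} {w : (Fin e × ℕ) →₀ ℕ}

lemma corner_layer (hπ : IsPart π) (hbox : InBox m N nLast π)
    (hE : EV π = _root_.expVec l a w) {i : ℕ} {x : Fin e → ℕ} {κ : ℕ}
    (hc : Corner π i x κ) : ∃ t, l t = i := by
  by_contra hex
  push_neg at hex
  have hfin := cornerSet_finite hπ hbox
  have h0 : _root_.expVec l a w (Sum.inl i) = 0 := by
    rw [expVec_apply_inl]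
    exact Finset.sum_eq_zero fun t _ => if_neg (hex t)
  have h1 : EV π (Sum.inl i) ≠ 0 := by
    rw [EV_apply_inl hfin]
    have : (⟨i, x, κ⟩ : ℕ × (Fin e → ℕ) × ℕ) ∈ hfin.toFinset.filter fun c => c.1 = i :=
      Finset.mem_filter.mpr ⟨hfin.mem_toFinset.mpr hc, rfl⟩
    have := Finset.card_pos.mpr ⟨_, this⟩
    omega
  rw [hE] at h1
  exact h1 h0

lemma card_corner_at (hπ : IsPart π) (hbox : InBox m N nLast π) (hl : StrictMono l)
    (hE : EV π = _root_.expVec l a w) (hfin : (CornerSet π).Finite) (t : Fin k) :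
    (hfin.toFinset.filter fun c => c.1 = l t).card = a t := by
  have h1 : EV π (Sum.inl (l t)) = (hfin.toFinset.filter fun c => c.1 = l t).card :=
    EV_apply_inl hfin (l t)
  have h2 : _root_.expVec l a w (Sum.inl (l t)) = a t := by
    rw [expVec_apply_inl]
    rw [Finset.sum_eq_single_of_mem t (Finset.mem_univ t)
      (fun t' _ hne => if_neg fun h => hne (hl.injective h))]
    exact if_pos rfl
  rw [hE, h2] at h1
  omega

lemma const_rr (hπ : IsPart π) (hbox : InBox m N nLast π) (hl : StrictMono l)
    (hE : EV π = _root_.expVec l a w) (t : Fin k) (x : Fin e → ℕ) :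
    π (rr l (t : ℕ), x) = π (l t, x) := by
  have := layers_eq_of_no_corner_between hπ (rr_le_self hl t)
    (fun i h1 h2 x' κ hc => by
      obtain ⟨s, rfl⟩ := corner_layer hπ hbox hE hc
      exact no_break_in_rr_interval hl t s h1 h2) x
  exact this.symm

lemma const_bb (hπ : IsPart π) (hbox : InBox m N nLast π) (hl : StrictMono l)
    (hE : EV π = _root_.expVec l a w) (i : ℕ) (x : Fin e → ℕ) :
    π (rr l (bb l i), x) = π (i, x) := by
  exact (layers_eq_of_no_corner_between hπ (rr_bb_le hl i)
    (fun i' h1 h2 x' κ hc => by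
      obtain ⟨s, rfl⟩ := corner_layer hπ hbox hE hc
      exact no_break_in_bb_interval hl s h1 h2) x).symm

lemma zero_top (hπ : IsPart π) (hbox : InBox m N nLast π) (hl : StrictMono l)
    (hE : EV π = _root_.expVec l a w) (x : Fin e → ℕ) :
    π (rr l k, x) = 0 := by
  have hnc : ∀ i', rr l k ≤ i' → ∀ x' κ, ¬ Corner π i' x' κ := by
    intro i' h1 x' κ hc
    obtain ⟨s, rfl⟩ := corner_layer hπ hbox hE hc
    rcases hk : k with _ | u
    · have := s.2; omega
    · have hu : u < k := by omega
      have h1' : rr l (u + 1) ≤ l s := by rw [← hk]; exact h1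
      rw [rr_succ l hu] at h1'
      have hsu : (s : ℕ) ≤ u := by have := s.2; omega
      have : l s ≤ l ⟨u, hu⟩ := hl.monotone (Fin.le_def.mpr hsu)
      omega
  have heq := layers_eq_of_no_corner_between hπ (le_max_left (rr l k) m)
    (fun i' h1 _ x' κ hc => hnc i' h1 x' κ hc) x
  have hz : π (max (rr l k) m, x) = 0 := by
    by_contra h0
    have := (hbox.1 _ h0).1
    simp only at this
    omega
  rw [← heq, hz]

/-! ### The relayering map -/

def relayer (l j : Fin k → ℕ) (π : ℕ × (Fin e → ℕ) → ℕ) : ℕ × (Fin e → ℕ) → ℕ :=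
  fun p => π (rr l (bb j p.1), p.2)

lemma relayer_break (hπ : IsPart π) (hbox : InBox m N nLast π) (hl : StrictMono l)
    {j : Fin k → ℕ} (hj : StrictMono j)
    (hE : EV π = _root_.expVec l a w) (t : Fin k) (x : Fin e → ℕ) :
    relayer l j π (j t, x) = π (l t, x) := by
  unfold relayer
  rw [show bb j (j t) = (t : ℕ) from bb_breakpoint hj t]
  exact const_rr hπ hbox hl hE t x

lemma relayer_break_succ (hl : StrictMono l) {j : Fin k → ℕ} (hj : StrictMono j)
    (t : Fin k) (x : Fin e → ℕ) :
    relayer l j π (j t + 1, x) = π (l t + 1, x) := by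
  unfold relayer
  rw [show bb j (j t + 1) = (t : ℕ) + 1 from bb_breakpoint_succ hj t, rr_succ l t.2]

lemma relayer_zero {j : Fin k → ℕ} (x : Fin e → ℕ) :
    relayer l j π (0, x) = π (0, x) := by
  unfold relayer
  rw [bb_zero]
  rfl

lemma relayer_high (hπ : IsPart π) (hbox : InBox m N nLast π) (hl : StrictMono l)
    {j : Fin k → ℕ} (hjm : ∀ t, j t < m)
    (hE : EV π = _root_.expVec l a w) {i : ℕ} (hi : m ≤ i) (x : Fin e → ℕ) :
    relayer l j π (i, x) = 0 := by
  unfold relayer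
  rw [bb_eq_k fun t => lt_of_lt_of_le (hjm t) hi]
  exact zero_top hπ hbox hl hE x

lemma relayer_isPart (hπ : IsPart π) (hbox : InBox m N nLast π) (hl : StrictMono l)
    {j : Fin k → ℕ} (hj : StrictMono j) (hjm : ∀ t, j t < m)
    (hE : EV π = _root_.expVec l a w) : IsPart (relayer l j π) := by
  constructor
  · refine Set.Finite.subset (box_finite m N) ?_
    rintro ⟨i, x⟩ hp
    simp only [Function.mem_support] at hp
    have hbox2 := hbox.1 _ hp
    refine ⟨?_, fun ℓ => (hbox2.2 ℓ)⟩
    by_contra hm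
    push_neg at hm
    exact hp (relayer_high hπ hbox hl hjm hE hm x)
  · rintro ⟨i, x⟩ ⟨i', x'⟩ h1 h2
    exact hπ.2 _ _ (rr_mono_on hl (bb_mono j h1) (bb_le j i')) h2

lemma relayer_inBox (hπ : IsPart π) (hbox : InBox m N nLast π) (hl : StrictMono l)
    {j : Fin k → ℕ} (hjm : ∀ t, j t < m)
    (hE : EV π = _root_.expVec l a w) : InBox m N nLast (relayer l j π) := by
  constructor
  · rintro ⟨i, x⟩ hp
    have hbox2 := hbox.1 _ hp
    refine ⟨?_, fun ℓ => (hbox2.2 ℓ)⟩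
    by_contra hm
    push_neg at hm
    exact hp (relayer_high hπ hbox hl hjm hE hm x)
  · exact fun p => hbox.2 _

lemma sh1_eq {π : ℕ × (Fin e → ℕ) → ℕ} (hπ : IsPart π) :
    sh1 π = {p : (Fin e → ℕ) × ℕ | 1 ≤ p.2 ∧ p.2 ≤ π (0, p.1)} := by
  ext p
  constructor
  · rintro ⟨i₁, h1, h2⟩
    exact ⟨h1, h2.trans (hπ.mono1 p.1 (Nat.zero_le i₁))⟩
  · rintro ⟨h1, h2⟩
    exact ⟨0, h1, h2⟩

lemma relayer_sh1 (hπ : IsPart π) (hbox : InBox m N nLast π) (hl : StrictMono l)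
    {j : Fin k → ℕ} (hj : StrictMono j) (hjm : ∀ t, j t < m)
    (hE : EV π = _root_.expVec l a w) :
    sh1 (relayer l j π) = sh1 π := by
  rw [sh1_eq (relayer_isPart hπ hbox hl hj hjm hE), sh1_eq hπ]
  ext p
  rw [Set.mem_setOf_eq, Set.mem_setOf_eq, relayer_zero]

lemma relayer_corner_iff (hπ : IsPart π) (hbox : InBox m N nLast π) (hl : StrictMono l)
    {j : Fin k → ℕ} (hj : StrictMono j)
    (hE : EV π = _root_.expVec l a w) (i : ℕ) (x : Fin e → ℕ) (κ : ℕ) :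
    Corner (relayer l j π) i x κ ↔ ∃ t : Fin k, i = j t ∧ Corner π (l t) x κ := by
  by_cases hex : ∃ t, j t = i
  · obtain ⟨t, rfl⟩ := hex
    have h1 : ∀ y, relayer l j π (j t, y) = π (l t, y) :=
      fun y => relayer_break hπ hbox hl hj hE t y
    have h2 : ∀ y, relayer l j π (j t + 1, y) = π (l t + 1, y) :=
      fun y => relayer_break_succ hl hj t y
    constructor
    · rintro ⟨c1, c2, c3, c4⟩
      rw [h1] at c2
      rw [h2] at c3
      exact ⟨t, rfl, c1, c2, c3, fun ℓ => by rw [← h1]; exact c4 ℓ⟩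
    · rintro ⟨t', heq, c1, c2, c3, c4⟩
      have ht' : t' = t := hj.injective heq.symm
      subst ht'
      refine ⟨c1, ?_, ?_, fun ℓ => ?_⟩
      · rw [h1]; exact c2
      · rw [h2]; exact c3
      · rw [h1]; exact c4 ℓ
  · push_neg at hex
    constructor
    · rintro ⟨c1, c2, c3, c4⟩
      exfalso
      have hbb : bb j (i + 1) = bb j i := bb_of_notin hj hex
      have c3' : relayer l j π (i + 1, x) = π (rr l (bb j i), x) := by
        unfold relayer
        rw [hbb]
      rw [c3'] at c3
      have c2' : κ ≤ π (rr l (bb j i), x) := c2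
      omega
    · rintro ⟨t, rfl, -⟩
      exact absurd rfl (hex t)

end Ctx


/-! ### The exponent vector of a relayered partition -/

section Ctx2

variable {k m nLast : ℕ} {N : Fin e → ℕ}
  {π : ℕ × (Fin e → ℕ) → ℕ} {l j : Fin k → ℕ} {a : Fin k → ℕ} {w : (Fin e × ℕ) →₀ ℕ}

def jE (j : Fin k → ℕ) (t : ℕ) : ℕ := if h : t < k then j ⟨t, h⟩ else 0

lemma jE_coe (j : Fin k → ℕ) (t : Fin k) : jE j (t : ℕ) = j t := by
  unfold jE
  rw [dif_pos t.2]

lemma GG_fst (hl : StrictMono l) {c : ℕ × (Fin e → ℕ) × ℕ} (t : Fin k) (hc : c.1 = l t) :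
    jE j (bb l c.1) = j t := by
  rw [hc, bb_breakpoint hl t, jE_coe]

lemma expVec_inl_break (hj : StrictMono j) (t : Fin k) :
    _root_.expVec j a w (Sum.inl (j t)) = a t := by
  rw [expVec_apply_inl]
  rw [Finset.sum_eq_single_of_mem t (Finset.mem_univ t)
    (fun t' _ hne => if_neg fun h => hne (hj.injective h))]
  exact if_pos rfl

lemma expVec_inl_off {i : ℕ} (hex : ∀ t, j t ≠ i) :
    _root_.expVec j a w (Sum.inl i) = 0 := by
  rw [expVec_apply_inl]
  exact Finset.sum_eq_zero fun t _ => if_neg (hex t)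

lemma cornerSet_relayer (hπ : IsPart π) (hbox : InBox m N nLast π) (hl : StrictMono l)
    (hj : StrictMono j) (hE : EV π = _root_.expVec l a w) :
    CornerSet (relayer l j π)
      = (fun c : ℕ × (Fin e → ℕ) × ℕ => (jE j (bb l c.1), c.2)) '' CornerSet π := by
  ext c
  constructor
  · intro hc
    obtain ⟨t, h1, h2⟩ := (relayer_corner_iff hπ hbox hl hj hE c.1 c.2.1 c.2.2).mp hc
    refine ⟨(l t, c.2), h2, ?_⟩
    have he1 : jE j (bb l (l t)) = j t := GG_fst hl t (c := ((l t, c.2) : ℕ × (Fin e → ℕ) × ℕ)) rfl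
    refine Prod.ext ?_ rfl
    show jE j (bb l (l t)) = c.1
    rw [he1, h1]
  · rintro ⟨c', hc', rfl⟩
    obtain ⟨t, ht⟩ := corner_layer hπ hbox hE hc'
    show Corner (relayer l j π) (jE j (bb l c'.1)) c'.2.1 c'.2.2
    rw [show jE j (bb l c'.1) = j t from GG_fst hl t ht.symm]
    refine (relayer_corner_iff hπ hbox hl hj hE _ _ _).mpr ⟨t, rfl, ?_⟩
    rw [ht]
    exact hc'

lemma EV_relayer_eq (hπ : IsPart π) (hbox : InBox m N nLast π) (hl : StrictMono l)
    (hj : StrictMono j) (hE : EV π = _root_.expVec l a w) :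
    EV (relayer l j π) = _root_.expVec j a w := by
  have hfin := cornerSet_finite hπ hbox
  set GG : ℕ × (Fin e → ℕ) × ℕ → ℕ × (Fin e → ℕ) × ℕ :=
    fun c => (jE j (bb l c.1), c.2) with hGG
  have hinj : Set.InjOn GG (CornerSet π) := by
    intro c hc c' hc' h
    obtain ⟨t, ht⟩ := corner_layer hπ hbox hE hc
    obtain ⟨t', ht'⟩ := corner_layer hπ hbox hE hc'
    have e1 : jE j (bb l c.1) = j t := GG_fst hl t ht.symm
    have e2 : jE j (bb l c'.1) = j t' := GG_fst hl t' ht'.symm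
    have hfst := congrArg Prod.fst h
    have hsnd := congrArg Prod.snd h
    simp only [hGG] at hfst hsnd
    rw [e1, e2] at hfst
    have htt : t = t' := hj.injective hfst
    exact Prod.ext (by rw [← ht, ← ht', htt]) hsnd
  have key : EV (relayer l j π) = ∑ c ∈ hfin.toFinset, vOf (GG c) := by
    unfold EV
    rw [show CornerSet (relayer l j π) = GG '' CornerSet π from
        cornerSet_relayer hπ hbox hl hj hE,
      finsum_mem_image hinj, ← finsum_mem_coe_finset]
    exact finsum_mem_congr (Set.Finite.coe_toFinset _).symm (fun _ _ => rfl)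
  rw [key]
  ext s
  rcases s with i | p
  · rw [Finsupp.finset_sum_apply,
      Finset.sum_congr rfl (fun c _ => vOf_apply_inl (GG c) i), ← Finset.card_filter]
    by_cases hex : ∃ t₀, j t₀ = i
    · obtain ⟨t₀, rfl⟩ := hex
      have hfilter : (hfin.toFinset.filter fun c => (GG c).1 = j t₀)
          = hfin.toFinset.filter fun c => c.1 = l t₀ := by
        refine Finset.filter_congr fun c hc => ?_
        obtain ⟨t, ht⟩ := corner_layer hπ hbox hE (hfin.mem_toFinset.mp hc)
        have e1 : (GG c).1 = j t := GG_fst hl t ht.symm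
        constructor
        · intro h
          have htt : t = t₀ := hj.injective (e1.symm.trans h)
          rw [← ht, htt]
        · intro h
          have htt : t = t₀ := hl.injective (ht.trans h)
          rw [e1, htt]
      rw [hfilter, card_corner_at hπ hbox hl hE hfin t₀, expVec_inl_break hj t₀]
    · push_neg at hex
      rw [expVec_inl_off hex]
      rw [Finset.card_eq_zero.mpr (Finset.filter_eq_empty_iff.mpr fun {c} hc h => ?_)]
      obtain ⟨t, ht⟩ := corner_layer hπ hbox hE (hfin.mem_toFinset.mp hc)
      exact hex t ((GG_fst hl t ht.symm).symm.trans h)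
  · rw [Finsupp.finset_sum_apply, expVec_apply_inr, ← expVec_apply_inr l a w p, ← hE,
      EV_eq_sum hfin, Finsupp.finset_sum_apply]
    refine Finset.sum_congr rfl fun c _ => ?_
    rw [vOf_apply_inr, vOf_apply_inr]

lemma relayer_relayer (hπ : IsPart π) (hbox : InBox m N nLast π) (hl : StrictMono l)
    (hj : StrictMono j) (hE : EV π = _root_.expVec l a w) :
    relayer j l (relayer l j π) = π := by
  funext p
  obtain ⟨i, x⟩ := p
  show relayer l j π (rr j (bb l i), x) = π (i, x)
  unfold relayer
  rw [bb_rr hj (bb_le l i)]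
  exact const_bb hπ hbox hl hE i x

end Ctx2

end HDG

end Aux

/-- Quasisymmetry of `g_ρ` in the first alphabet `x^{(1)} = (x₁, …, x_{n₁})`:
for positive exponents `a` and strictly increasing index sequences `l`, `j` in `[n₁]`,
the coefficients of the corresponding monomials agree (for any fixed monomial `w` in
the other alphabets). -/
theorem gFull_quasisymmetric {e : ℕ} (m : ℕ) (N : Fin e → ℕ) (nLast : ℕ)
    (ρ : (Fin e → ℕ) → ℕ) (hρ : IsPart' ρ)
    {k : ℕ} (a : Fin k → ℕ) (ha : ∀ t, 0 < a t)
    (l j : Fin k → ℕ) (hl : StrictMono l) (hj : StrictMono j)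
    (hlm : ∀ t, l t < m) (hjm : ∀ t, j t < m) (w : (Fin e × ℕ) →₀ ℕ) :
    MvPolynomial.coeff (expVec l a w) (gFull e m N nLast ρ)
      = MvPolynomial.coeff (expVec j a w) (gFull e m N nLast ρ) := by
  classical
  rw [coeff_gFull m N nLast ρ (expVec l a w), coeff_gFull m N nLast ρ (expVec j a w)]
  have key : ∀ (l' j' : Fin k → ℕ), StrictMono l' → StrictMono j' →
      (∀ t, l' t < m) → (∀ t, j' t < m) →
      ((S_finite (e := e) m N nLast ρ).toFinset.filter fun π => EV π = expVec l' a w).card ≤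
      ((S_finite m N nLast ρ).toFinset.filter fun π => EV π = expVec j' a w).card := by
    intro l' j' hl' hj' hlm' hjm'
    refine Finset.card_le_card_of_injOn (relayer l' j') ?_ ?_
    · intro π hmem
      rw [Finset.mem_coe, Finset.mem_filter, Set.Finite.mem_toFinset] at hmem ⊢
      obtain ⟨⟨hp, hb, hs⟩, hEV⟩ := hmem
      refine ⟨⟨relayer_isPart hp hb hl' hj' hjm' hEV, relayer_inBox hp hb hl' hjm' hEV, ?_⟩,
        EV_relayer_eq hp hb hl' hj' hEV⟩
      rw [relayer_sh1 hp hb hl' hj' hjm' hEV, hs]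
    · intro π₁ h₁ π₂ h₂ heq
      rw [Finset.mem_coe, Finset.mem_filter, Set.Finite.mem_toFinset] at h₁ h₂
      obtain ⟨⟨hp1, hb1, -⟩, hE1⟩ := h₁
      obtain ⟨⟨hp2, hb2, -⟩, hE2⟩ := h₂
      rw [← relayer_relayer hp1 hb1 hl' hj' hE1, heq, relayer_relayer hp2 hb2 hl' hj' hE2]
  rw [le_antisymm (key l j hl hj hlm hjm) (key j l hj hl hjm hlm)]
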